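/- Let n ≥ 2 and let λ_1 ≥ λ_2 ≥ ⋯ ≥ λ_n be real numbers satisfying ∑_{i=1}^n arctan λ_i ≥ (n−2)π/2 and λ_n < 0. Then −1/λ_n ≥ 1/λ_1 + 1/λ_2 + ⋯ + 1/λ_{n−1} ≥ (n−1)/λ_1. -/

import Mathlib

open Real

lemma my_arctan_add_le {x y : ℝ} (hx : 0 ≤ x) (hy : 0 ≤ y) :
    Real.arctan (x + y) ≤ Real.arctan x + Real.arctan y := by
  rcases lt_or_ge (x * y) 1 with h | h
  · rw [Real.arctan_add h]
    apply Real.arctan_strictMono.monotone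
    have h1 : 0 < 1 - x * y := by linarith
    rw [le_div_iff₀ h1]
    nlinarith [mul_nonneg (mul_nonneg (add_nonneg hx hy) hx) hy]
  · have hx' : 0 < x := by nlinarith
    have hy' : 0 < y := by nlinarith
    have hxy : x⁻¹ ≤ y := by
      rw [inv_le_iff_one_le_mul₀ hx']
      nlinarith
    have h2 : Real.arctan x⁻¹ ≤ Real.arctan y := Real.arctan_strictMono.monotone hxy
    rw [Real.arctan_inv_of_pos hx'] at h2
    have := Real.arctan_lt_pi_div_two (x + y)
    linarith

lemma my_arctan_sum_le {ι : Type*} (s : Finset ι) (f : ι → ℝ) (h : ∀ i ∈ s, 0 ≤ f i) :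
    Real.arctan (∑ i ∈ s, f i) ≤ ∑ i ∈ s, Real.arctan (f i) := by
  induction s using Finset.cons_induction with
  | empty => simp
  | cons a s ha ih =>
      rw [Finset.sum_cons, Finset.sum_cons]
      have h1 : 0 ≤ f a := h a (Finset.mem_cons_self a s)
      have h2 : ∀ i ∈ s, 0 ≤ f i := fun i hi => h i (Finset.mem_cons_of_mem hi)
      refine le_trans (my_arctan_add_le h1 (Finset.sum_nonneg h2)) ?_
      exact add_le_add_right (ih h2) _

/-- For ordered reals `λ_1 ≥ ⋯ ≥ λ_n` with `∑ arctan λ_i ≥ (n-2)π/2`, `n ≥ 2`, and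
`λ_n < 0`, one has `-1/λ_n ≥ 1/λ_1 + ⋯ + 1/λ_{n-1} ≥ (n-1)/λ_1`.  (Indices are
zero-based: `lam ⟨0⟩ = λ_1`, `lam ⟨n-1⟩ = λ_n`; the middle sum runs over the first
`n-1` entries.) -/
theorem ordered_eigen_reciprocal
    (n : ℕ) (hn : 2 ≤ n) (lam : Fin n → ℝ)
    (hsort : ∀ i j : Fin n, i ≤ j → lam j ≤ lam i)
    (hsum : ((n : ℝ) - 2) * Real.pi / 2 ≤ ∑ i, Real.arctan (lam i))
    (hneg : lam ⟨n - 1, by omega⟩ < 0) :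
    (∑ i ∈ Finset.univ.filter (fun i : Fin n => (i : ℕ) < n - 1), 1 / lam i)
        ≤ -(1 / lam ⟨n - 1, by omega⟩) ∧
      ((n : ℝ) - 1) / lam ⟨0, by omega⟩
        ≤ ∑ i ∈ Finset.univ.filter (fun i : Fin n => (i : ℕ) < n - 1), 1 / lam i := by
  set last : Fin n := ⟨n - 1, by omega⟩ with hlast
  set A : Finset (Fin n) := Finset.univ.filter (fun i : Fin n => (i : ℕ) < n - 1) with hA
  have hAerase : A = Finset.univ.erase last := by
    ext i
    have hi := i.isLt
    have hlv : (last : ℕ) = n - 1 := rfl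
    simp only [hA, Finset.mem_filter, Finset.mem_univ, true_and, Finset.mem_erase,
      Ne, Fin.ext_iff, hlv, and_true]
    omega
  have hAcard : A.card = n - 1 := by
    rw [hAerase, Finset.card_erase_of_mem (Finset.mem_univ _)]
    simp
  -- positivity of lam at index n-2, hence on all of A
  set m : Fin n := ⟨n - 2, by omega⟩ with hm
  have hmval : (m : ℕ) = n - 2 := rfl
  have hmne : last ≠ m := by
    simp only [hm, hlast, Ne, Fin.ext_iff]
    omega
  have hposm : 0 < lam m := by
    have e1 : (∑ i, Real.arctan (lam i)) =
        Real.arctan (lam m) + ∑ i ∈ Finset.univ.erase m, Real.arctan (lam i) :=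
      (Finset.add_sum_erase _ _ (Finset.mem_univ m)).symm
    have e2 : (∑ i ∈ Finset.univ.erase m, Real.arctan (lam i)) =
        Real.arctan (lam last) +
          ∑ i ∈ (Finset.univ.erase m).erase last, Real.arctan (lam i) :=
      (Finset.add_sum_erase _ _ (Finset.mem_erase.mpr ⟨hmne, Finset.mem_univ _⟩)).symm
    have hcard2 : ((Finset.univ.erase m).erase last).card = n - 2 := by
      rw [Finset.card_erase_of_mem (Finset.mem_erase.mpr ⟨hmne, Finset.mem_univ _⟩),
        Finset.card_erase_of_mem (Finset.mem_univ _), Finset.card_univ, Fintype.card_fin]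
      omega
    have hbound : ∑ i ∈ (Finset.univ.erase m).erase last, Real.arctan (lam i)
        ≤ ((n : ℝ) - 2) * (π / 2) := by
      have := Finset.sum_le_card_nsmul ((Finset.univ.erase m).erase last)
        (fun i => Real.arctan (lam i)) (π / 2)
        (fun i _ => (Real.arctan_lt_pi_div_two _).le)
      rw [hcard2, nsmul_eq_mul] at this
      refine this.trans_eq ?_
      rw [Nat.cast_sub hn]
      norm_num
    have hlastneg : Real.arctan (lam last) < 0 := by
      have := Real.arctan_strictMono hneg
      rwa [Real.arctan_zero] at this
    have hθm : 0 < Real.arctan (lam m) := by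
      rw [e1, e2] at hsum
      nlinarith
    by_contra hcon
    push_neg at hcon
    have := Real.arctan_strictMono.monotone hcon
    rw [Real.arctan_zero] at this
    linarith
  have hposA : ∀ i ∈ A, 0 < lam i := by
    intro i hi
    have hiv : (i : ℕ) < n - 1 := by
      rw [hA] at hi
      simpa using hi
    have hile : i ≤ m := by
      rw [Fin.le_def, hmval]
      omega
    exact lt_of_lt_of_le hposm (hsort i m hile)
  -- setup T
  set T : ℝ := -(lam last)⁻¹ with hT
  have hTpos : 0 < T := by
    rw [hT, neg_pos]
    exact inv_lt_zero.mpr hneg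
  have hlastθ : Real.arctan (lam last) = Real.arctan T - π / 2 := by
    have h1 : Real.arctan (lam last)⁻¹ = -(π / 2) - Real.arctan (lam last) :=
      Real.arctan_inv_of_neg hneg
    have h2 : Real.arctan (lam last)⁻¹ = -Real.arctan T := by
      rw [hT, ← Real.arctan_neg, neg_neg]
    rw [h2] at h1
    linarith
  -- split sum over univ as last + A
  have hsplit2 : (∑ i, Real.arctan (lam i)) =
      Real.arctan (lam last) + ∑ i ∈ A, Real.arctan (lam i) := by
    rw [hAerase]
    exact (Finset.add_sum_erase _ _ (Finset.mem_univ last)).symm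
  -- express arctan on A via inverses
  have hinvsum : ∑ i ∈ A, Real.arctan (lam i)⁻¹
      = ((n : ℝ) - 1) * (π / 2) - ∑ i ∈ A, Real.arctan (lam i) := by
    have hc : ∀ i ∈ A, Real.arctan (lam i)⁻¹ = π / 2 - Real.arctan (lam i) := fun i hi =>
      Real.arctan_inv_of_pos (hposA i hi)
    rw [Finset.sum_congr rfl hc, Finset.sum_sub_distrib, Finset.sum_const, hAcard,
      nsmul_eq_mul, Nat.cast_sub (by omega)]
    norm_num
  have hkey : ∑ i ∈ A, Real.arctan (lam i)⁻¹ ≤ Real.arctan T := by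
    rw [hinvsum]
    rw [hsplit2, hlastθ] at hsum
    have hpi := Real.pi_pos
    nlinarith
  have hmain : ∑ i ∈ A, (lam i)⁻¹ ≤ T := by
    have h1 : Real.arctan (∑ i ∈ A, (lam i)⁻¹) ≤ ∑ i ∈ A, Real.arctan (lam i)⁻¹ :=
      my_arctan_sum_le A _ (fun i hi => (inv_pos.mpr (hposA i hi)).le)
    exact Real.arctan_strictMono.le_iff_le.mp (h1.trans hkey)
  constructor
  · calc ∑ i ∈ A, 1 / lam i = ∑ i ∈ A, (lam i)⁻¹ := by simp [one_div]
      _ ≤ T := hmain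
      _ = -(1 / lam last) := by rw [hT, one_div]
  · have h0A : ∀ i ∈ A, 1 / lam ⟨0, by omega⟩ ≤ 1 / lam i := by
      intro i hi
      have hle : lam i ≤ lam ⟨0, by omega⟩ := by
        refine hsort _ i ?_
        rw [Fin.le_def]
        exact Nat.zero_le _
      exact one_div_le_one_div_of_le (hposA i hi) hle
    refine le_trans (le_of_eq ?_) (Finset.sum_le_sum h0A)
    have hcast := Nat.cast_sub (R := ℝ) (show 1 ≤ n by omega)
    rw [Finset.sum_const]
    rw [hAcard]
    rw [nsmul_eq_mul]
    simp only [hcast]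
    push_cast
    ring
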